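/- Let k ≥ 0 and p ≥ 1 be integers and C ≥ 1 a real number. Let 𝒯 be a finite set of pairwise distinct (k,p)-trees such that every T ∈ 𝒯 is C-nice, i.e., Tran(T) ≤ C^p. Then bell_k(p)^{1/p} ≥ (p / (e · C²)) · |𝒯|^{1/p}. -/

import Mathlib

/-- `Q` is a refinement of `P`: every part of `Q` is contained in some part of `P`. -/
def FPRefines {p : ℕ} (Q P : Finpartition (Finset.univ : Finset (Fin p))) : Prop :=
  ∀ a ∈ Q.parts, ∃ b ∈ P.parts, a ⊆ b

/-- `f = (T_1, …, T_k)` is a `k`-level (hierarchical) partition of `[p]`: each `T_{i+1}`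
is a refinement of `T_i`. -/
def IsKLevel {p : ℕ} (k : ℕ)
    (f : Fin k → Finpartition (Finset.univ : Finset (Fin p))) : Prop :=
  ∀ (i : ℕ) (h : i + 1 < k), FPRefines (f ⟨i + 1, h⟩) (f ⟨i, Nat.lt_of_succ_lt h⟩)

/-- The order-`k` Bell number `bell_k(p)`: the number of `k`-level hierarchical partitions
of `[p]` (so `bell_0(p) = 1`). -/
noncomputable def bellk (k p : ℕ) : ℕ :=
  Nat.card {f : Fin k → Finpartition (Finset.univ : Finset (Fin p)) // IsKLevel k f}

/-- A rooted plane tree: every node carries the (ordered, finite) list of its children. -/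
inductive PTree : Type where
  | node : List PTree → PTree

mutual
/-- The number of leaves of a rooted plane tree (a node with no children is a leaf). -/
def PTree.numLeaves : PTree → ℕ
  | .node [] => 1
  | .node (t :: ts) => PTree.numLeavesList (t :: ts)

/-- The total number of leaves of the trees in a list. -/
def PTree.numLeavesList : List PTree → ℕ
  | [] => 0
  | t :: ts => t.numLeaves + PTree.numLeavesList ts
end

mutual
/-- `Tran(T) = ∏_{u a node of T} (number of children of u)!`. -/
def PTree.tran : PTree → ℕ
  | .node ts => ts.length.factorial * PTree.tranList ts

/-- The product of `Tran` over a list of trees. -/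
def PTree.tranList : List PTree → ℕ
  | [] => 1
  | t :: ts => t.tran * PTree.tranList ts
end

/-- `UniformDepth d T` holds iff every root-to-leaf path of `T` has exactly `d` edges. -/
inductive PTree.UniformDepth : ℕ → PTree → Prop where
  | leaf : PTree.UniformDepth 0 (.node [])
  | node (ts : List PTree) (d : ℕ) (hne : ts ≠ []) (h : ∀ t ∈ ts, PTree.UniformDepth d t) :
      PTree.UniformDepth (d + 1) (.node ts)

namespace PTree

instance : Inhabited PTree := ⟨.node []⟩

/-- split a list of labels into chunks, one per subtree, sized by leaf counts -/
def chunks : List PTree → List ℕ → List (List ℕ)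
  | [], _ => []
  | t :: ts, l => l.take t.numLeaves :: chunks ts (l.drop t.numLeaves)

mutual
/-- the address (root-to-leaf path) of the leaf labeled `a` in tree `T` with labels `l` -/
def addr : PTree → List ℕ → ℕ → List ℕ
  | .node [], _, _ => []
  | .node (t :: ts), l, a => addrL 0 (t :: ts) l a
def addrL : ℕ → List PTree → List ℕ → ℕ → List ℕ
  | _, [], _, _ => []
  | i, t :: ts, l, a =>
      if a ∈ l.take t.numLeaves then i :: addr t (l.take t.numLeaves) a
      else addrL (i + 1) ts (l.drop t.numLeaves) a
end

mutual
theorem numLeaves_pos : ∀ T : PTree, 0 < T.numLeaves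
  | .node [] => Nat.one_pos
  | .node (t :: ts) => by
      show 0 < PTree.numLeavesList (t :: ts)
      have := numLeaves_pos t
      simp [numLeavesList]; omega
end

@[simp] theorem numLeaves_node_cons (t : PTree) (ts : List PTree) :
    (PTree.node (t :: ts)).numLeaves = t.numLeaves + numLeavesList ts := rfl

theorem numLeaves_node_ne (ts : List PTree) (h : ts ≠ []) :
    (PTree.node ts).numLeaves = numLeavesList ts := by
  cases ts with
  | nil => exact absurd rfl h
  | cons t ts => rfl

@[simp] theorem chunks_nil (l : List ℕ) : chunks [] l = [] := rfl
@[simp] theorem chunks_cons (t : PTree) (ts : List PTree) (l : List ℕ) :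
    chunks (t :: ts) l = l.take t.numLeaves :: chunks ts (l.drop t.numLeaves) := rfl

@[simp] theorem chunks_length (ts : List PTree) (l : List ℕ) :
    (chunks ts l).length = ts.length := by
  induction ts generalizing l with
  | nil => rfl
  | cons t ts ih => simp [ih]

theorem chunks_sublist {ts : List PTree} {l : List ℕ} : ∀ c ∈ chunks ts l, c.Sublist l := by
  induction ts generalizing l with
  | nil => simp
  | cons t ts ih =>
    intro c hc
    simp only [chunks_cons, List.mem_cons] at hc
    rcases hc with rfl | hc
    · exact List.take_sublist _ _
    · exact (ih c hc).trans (List.drop_sublist _ _)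

theorem join_chunks {ts : List PTree} {l : List ℕ} (h : l.length = numLeavesList ts) :
    (chunks ts l).flatten = l := by
  induction ts generalizing l with
  | nil =>
    simp only [numLeavesList] at h
    simp [List.length_eq_zero_iff.mp h]
  | cons t ts ih =>
    simp only [chunks_cons, List.flatten_cons]
    rw [ih (by simp only [numLeavesList] at h; simp [h]), List.take_append_drop]

theorem zipChunk_len {ts : List PTree} {l : List ℕ} (h : l.length = numLeavesList ts) :
    ∀ tc ∈ ts.zip (chunks ts l), (tc.2 : List ℕ).length = (tc.1 : PTree).numLeaves := by
  induction ts generalizing l with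
  | nil => simp
  | cons t ts ih =>
    intro tc htc
    simp only [numLeavesList] at h
    simp only [chunks_cons, List.zip_cons_cons, List.mem_cons] at htc
    rcases htc with rfl | htc
    · simp; omega
    · exact ih (by simp [h]) tc htc

theorem chunks_pairwise {ts : List PTree} {l : List ℕ} (h : l.Nodup) :
    (chunks ts l).Pairwise (fun c c' => ∀ a, a ∈ c → a ∈ c' → False) := by
  induction ts generalizing l with
  | nil => simp
  | cons t ts ih =>
    simp only [chunks_cons, List.pairwise_cons]
    have h' : (l.take t.numLeaves ++ l.drop t.numLeaves).Nodup := by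
      rw [List.take_append_drop]; exact h
    have hd := (List.nodup_append'.mp h').2.2
    constructor
    · intro c hc a ha hac
      have : a ∈ l.drop t.numLeaves := (chunks_sublist c hc).mem hac
      exact hd ha this
    · exact ih (h.sublist (List.drop_sublist _ _))

theorem chunk_unique {ts : List PTree} {l : List ℕ} (h : l.Nodup) {a : ℕ}
    {i i' : ℕ} (hi : i < (chunks ts l).length) (hi' : i' < (chunks ts l).length)
    (ha : a ∈ (chunks ts l)[i]) (ha' : a ∈ (chunks ts l)[i']) : i = i' := by
  rcases lt_trichotomy i i' with hlt | heq | hlt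
  · exact (((List.pairwise_iff_getElem.mp (chunks_pairwise h)) i i' hi hi' hlt a ha) ha').elim
  · exact heq
  · exact (((List.pairwise_iff_getElem.mp (chunks_pairwise h)) i' i hi' hi hlt a ha') ha).elim

theorem mem_chunk_exists {ts : List PTree} {l : List ℕ} (h : l.length = numLeavesList ts)
    {a : ℕ} (ha : a ∈ l) : ∃ i, ∃ (hi : i < ts.length), a ∈ (chunks ts l)[i]'(by simpa using hi) := by
  rw [← join_chunks h] at ha
  rcases List.mem_flatten.mp ha with ⟨c, hc, hac⟩
  rcases List.mem_iff_getElem.mp hc with ⟨i, hi, rfl⟩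
  exact ⟨i, by simpa using hi, hac⟩

theorem addrL_spec {ts : List PTree} {l : List ℕ} {a : ℕ} (hnd : l.Nodup) :
    ∀ (i₀ i : ℕ) (hi : i < ts.length), a ∈ (chunks ts l)[i]'(by simpa using hi) →
      addrL i₀ ts l a = (i₀ + i) :: addr ts[i] ((chunks ts l)[i]'(by simpa using hi)) a := by
  induction ts generalizing l with
  | nil => intro _ i hi; simp at hi
  | cons t ts ih =>
    intro i₀ i hi ha
    cases i with
    | zero =>
      simp only [chunks_cons, List.getElem_cons_zero] at ha ⊢
      simp [addrL, ha]
    | succ i =>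
      simp only [chunks_cons, List.getElem_cons_succ] at ha ⊢
      have hnotin : a ∉ l.take t.numLeaves := by
        intro hmem
        have : a ∈ l.drop t.numLeaves :=
          (chunks_sublist _ (List.getElem_mem _)).mem ha
        exact (List.nodup_append'.mp (by rw [List.take_append_drop]; exact hnd)).2.2 hmem this
      simp only [addrL, hnotin, if_false]
      have := ih (hnd.sublist (List.drop_sublist _ _)) (i₀ + 1) i (by simpa using hi) ha
      rw [this]; congr 1; omega

theorem addr_spec {ts : List PTree} {l : List ℕ} {a : ℕ} (hne : ts ≠ []) (hnd : l.Nodup)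
    (i : ℕ) (hi : i < ts.length) (ha : a ∈ (chunks ts l)[i]'(by simpa using hi)) :
    addr (.node ts) l a = i :: addr ts[i] ((chunks ts l)[i]'(by simpa using hi)) a := by
  cases ts with
  | nil => exact absurd rfl hne
  | cons t ts =>
    show addrL 0 (t :: ts) l a = _
    simpa using addrL_spec hnd 0 i hi ha

theorem ud_zero {T : PTree} (h : T.UniformDepth 0) : T = .node [] := by
  cases h; rfl

theorem ud_succ {T : PTree} {d : ℕ} (h : T.UniformDepth (d + 1)) :
    ∃ ts, T = .node ts ∧ ts ≠ [] ∧ ∀ t ∈ ts, t.UniformDepth d := by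
  cases h with
  | node ts d hne h => exact ⟨ts, rfl, hne, h⟩

theorem tranList_prod (ts : List PTree) : tranList ts = (ts.map tran).prod := by
  induction ts with
  | nil => rfl
  | cons t ts ih => simp [tranList, ih]

theorem numLeavesList_eq (ts : List PTree) : numLeavesList ts = (ts.map numLeaves).sum := by
  induction ts with
  | nil => rfl
  | cons t ts ih => simp [numLeavesList, ih]

theorem addr_length {d : ℕ} {T : PTree} (h : T.UniformDepth d) :
    ∀ l a, l.Nodup → l.length = T.numLeaves → a ∈ l → (addr T l a).length = d := by
  induction h with
  | leaf => intro l a _ _ _; simp [addr]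
  | node ts d hne h ih =>
    intro l a hnd hlen ha
    have hlen' : l.length = numLeavesList ts := by rwa [numLeaves_node_ne ts hne] at hlen
    obtain ⟨i, hi, hai⟩ := mem_chunk_exists hlen' ha
    rw [addr_spec hne hnd i hi hai]
    have hmem : (ts[i], (chunks ts l)[i]'(by simpa using hi)) ∈ ts.zip (chunks ts l) := by
      rw [List.mem_iff_getElem]
      exact ⟨i, by simp [hi], by simp⟩
    have hclen := zipChunk_len hlen' _ hmem
    have hcnd : ((chunks ts l)[i]'(by simpa using hi)).Nodup :=
      hnd.sublist (chunks_sublist _ (List.getElem_mem _))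
    simp only [List.length_cons]
    rw [ih ts[i] (List.getElem_mem _) _ a hcnd hclen hai]

theorem addr_inj {d : ℕ} {T : PTree} (h : T.UniformDepth d) :
    ∀ l a b, l.Nodup → l.length = T.numLeaves → a ∈ l → b ∈ l →
      addr T l a = addr T l b → a = b := by
  induction h with
  | leaf =>
    intro l a b hnd hlen ha hb _
    rcases List.length_eq_one_iff.mp hlen with ⟨x, rfl⟩
    simp at ha hb; omega
  | node ts d hne h ih =>
    intro l a b hnd hlen ha hb heq
    have hlen' : l.length = numLeavesList ts := by rwa [numLeaves_node_ne ts hne] at hlen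
    obtain ⟨i, hi, hai⟩ := mem_chunk_exists hlen' ha
    obtain ⟨j, hj, hbj⟩ := mem_chunk_exists hlen' hb
    rw [addr_spec hne hnd i hi hai, addr_spec hne hnd j hj hbj] at heq
    have hij : i = j := by injection heq with h1 _
    subst hij
    injection heq with _ heq2
    have hmem : (ts[i], (chunks ts l)[i]'(by simpa using hi)) ∈ ts.zip (chunks ts l) := by
      rw [List.mem_iff_getElem]
      exact ⟨i, by simp [hi], by simp⟩
    exact ih ts[i] (List.getElem_mem _) _ a b
      (hnd.sublist (chunks_sublist _ (List.getElem_mem _)))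
      (zipChunk_len hlen' _ hmem) hai hbj heq2

/-- A chunk is exactly the block of the "same first address step" relation. -/
theorem block_eq {ts : List PTree} {l : List ℕ} (hne : ts ≠ []) (hnd : l.Nodup)
    (hlen : l.length = numLeavesList ts) {a : ℕ} {i : ℕ} (hi : i < ts.length)
    (hai : a ∈ (chunks ts l)[i]'(by simpa using hi)) (b : ℕ) :
    b ∈ (chunks ts l)[i]'(by simpa using hi) ↔
      b ∈ l ∧ (addr (.node ts) l b).take 1 = (addr (.node ts) l a).take 1 := by
  constructor
  · intro hbi
    refine ⟨(chunks_sublist _ (List.getElem_mem _)).mem hbi, ?_⟩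
    rw [addr_spec hne hnd i hi hai, addr_spec hne hnd i hi hbi]
    simp
  · rintro ⟨hbl, htake⟩
    obtain ⟨j, hj, hbj⟩ := mem_chunk_exists hlen hbl
    rw [addr_spec hne hnd i hi hai, addr_spec hne hnd j hj hbj] at htake
    simp only [List.take_succ_cons, List.take_zero] at htake
    injection htake with hji _
    subst hji
    exact hbj

/-- Generic counting lemma: lists whose classifier trace is a permutation of `bs`,
with elements in per-class finite sets. -/
theorem headI_cons_tail {α : Type*} [Inhabited α] {as : List α} (h : as ≠ []) :
    as = as.headI :: as.tail := by
  cases as with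
  | nil => exact absurd rfl h
  | cons x xs => rfl

theorem headI_mem' {α : Type*} [Inhabited α] {as : List α} (h : as ≠ []) : as.headI ∈ as := by
  rw [headI_cons_tail h]
  exact List.mem_cons_self

theorem list_perm_count {α β : Type*} [Inhabited α] (γ : α → β) (F : β → α → Prop) (n : β → ℕ)
    (hF : ∀ b, ∀ u : Finset α, (∀ a ∈ u, F b a) → u.card ≤ n b) :
    ∀ (N : ℕ) (bs : List β), bs.length = N → bs.Nodup →
      ∀ s : Finset (List α),
        (∀ as ∈ s, (as.map γ).Perm bs ∧ ∀ a ∈ as, F (γ a) a) →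
        s.card ≤ N.factorial * (bs.map n).prod := by
  classical
  intro N
  induction N with
  | zero =>
    intro bs hlen _ s hs
    rcases List.length_eq_zero_iff.mp hlen with rfl
    have : ∀ as ∈ s, as = [] := by
      intro as has
      have h1 : (as.map γ) = [] := List.Perm.eq_nil (hs as has).1
      exact List.map_eq_nil_iff.mp h1
    calc s.card ≤ ({[]} : Finset (List α)).card := Finset.card_le_card (by
            intro as has; simp [this as has])
      _ = 1 := by simp
      _ ≤ _ := by simp [Nat.factorial]
  | succ N ih =>
    intro bs hlen hnd s hs
    have hne : bs ≠ [] := by intro h; rw [h] at hlen; simp at hlen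
    -- first element classifier
    have hmem : ∀ as ∈ s, γ as.headI ∈ bs.toFinset := by
      intro as has
      rcases hs as has with ⟨hperm, _⟩
      have hasne : as ≠ [] := by
        intro h; rw [h] at hperm; exact hne (hperm.symm.eq_nil ▸ (List.Perm.eq_nil hperm.symm))
      have : γ as.headI ∈ as.map γ := List.mem_map_of_mem (f := γ) (headI_mem' hasne)
      simpa using hperm.mem_iff.mp this
    rw [Finset.card_eq_sum_card_fiberwise hmem]
    have hbound : ∀ b ∈ bs.toFinset,
        (s.filter (fun as => γ as.headI = b)).card ≤ n b * (N.factorial * ((bs.erase b).map n).prod) := by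
      intro b hb
      rw [List.mem_toFinset] at hb
      set t := s.filter (fun as => γ as.headI = b) with ht
      set u := t.image (·.headI) with hu
      set s' := t.image (·.tail) with hs'
      have htas : ∀ as ∈ t, as ≠ [] := by
        intro as hast h
        rcases Finset.mem_filter.mp hast with ⟨has, _⟩
        have hperm := (hs as has).1
        rw [h] at hperm
        exact hne (List.Perm.eq_nil hperm.symm)
      have hucard : u.card ≤ n b := by
        apply hF
        intro a ha
        rcases Finset.mem_image.mp ha with ⟨as, hast, rfl⟩
        rcases Finset.mem_filter.mp hast with ⟨has, hgb⟩
        have : as.headI ∈ as := headI_mem' (htas as hast)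
        have := (hs as has).2 _ this
        rw [hgb] at this; exact this
      have hscard : s'.card ≤ N.factorial * ((bs.erase b).map n).prod := by
        apply ih (bs.erase b) (by rw [List.length_erase_of_mem hb, hlen]; rfl) (hnd.erase b)
        intro as' has'
        rcases Finset.mem_image.mp has' with ⟨as, hast, rfl⟩
        rcases Finset.mem_filter.mp hast with ⟨has, hgb⟩
        have hcons : as = as.headI :: as.tail := headI_cons_tail (htas as hast)
        constructor
        · have hperm := (hs as has).1
          rw [hcons] at hperm
          simp only [List.map_cons] at hperm
          rw [hgb] at hperm
          exact (List.cons_perm_iff_perm_erase.mp hperm).2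
        · intro a ha
          exact (hs as has).2 a (by rw [hcons]; exact List.mem_cons_of_mem _ ha)
      calc t.card ≤ (u ×ˢ s').card := by
            apply Finset.card_le_card_of_injOn (fun as => (as.headI, as.tail))
            · intro as hast
              exact Finset.mem_product.mpr ⟨Finset.mem_image_of_mem _ hast, Finset.mem_image_of_mem _ hast⟩
            · intro as1 h1 as2 h2 heq
              simp only [Prod.mk.injEq] at heq
              rw [headI_cons_tail (htas _ h1), headI_cons_tail (htas _ h2), heq.1, heq.2]
        _ = u.card * s'.card := Finset.card_product u s'
        _ ≤ n b * (N.factorial * ((bs.erase b).map n).prod) := Nat.mul_le_mul hucard hscard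
    calc ∑ b ∈ bs.toFinset, (s.filter (fun as => γ as.headI = b)).card
        ≤ ∑ b ∈ bs.toFinset, n b * (N.factorial * ((bs.erase b).map n).prod) :=
          Finset.sum_le_sum hbound
      _ = ∑ b ∈ bs.toFinset, N.factorial * (n b * ((bs.erase b).map n).prod) := by
          apply Finset.sum_congr rfl; intro b _; ring
      _ = ∑ _b ∈ bs.toFinset, N.factorial * (bs.map n).prod := by
          apply Finset.sum_congr rfl
          intro b hb
          rw [List.mem_toFinset] at hb
          rw [List.prod_map_erase n hb]
      _ = (N + 1) * (N.factorial * (bs.map n).prod) := by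
          rw [Finset.sum_const, List.toFinset_card_of_nodup hnd, hlen]; ring
      _ = (N + 1).factorial * (bs.map n).prod := by rw [Nat.factorial_succ]; ring

theorem mem_zip_of_lt {ts : List PTree} {l : List ℕ} {i : ℕ} (hi : i < ts.length)
    (hi2 : i < (chunks ts l).length) :
    (ts[i], (chunks ts l)[i]) ∈ ts.zip (chunks ts l) := by
  rw [List.mem_iff_getElem]
  refine ⟨i, ?_, ?_⟩
  · rw [List.length_zip]; omega
  · rw [List.getElem_zip]

theorem chunk_nonempty {ts : List PTree} {l : List ℕ} (hlen : l.length = numLeavesList ts)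
    {c : List ℕ} (hc : c ∈ chunks ts l) : c ≠ [] := by
  rcases List.mem_iff_getElem.mp hc with ⟨i, hi, rfl⟩
  have hi' : i < ts.length := by simpa using hi
  have := zipChunk_len hlen _ (mem_zip_of_lt hi' hi)
  have hpos := numLeaves_pos (ts[i]'hi')
  intro h
  rw [h] at this
  simp only [List.length_nil] at this
  omega

theorem chunkSets_nodup {ts : List PTree} {l : List ℕ} (hnd : l.Nodup)
    (hlen : l.length = numLeavesList ts) : ((chunks ts l).map List.toFinset).Nodup := by
  show ((chunks ts l).map List.toFinset).Pairwise (· ≠ ·)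
  rw [List.pairwise_map]
  exact (chunks_pairwise hnd).imp_of_mem (fun {c c'} hc _ hdisj heq => by
      rcases List.exists_mem_of_ne_nil _ (chunk_nonempty hlen hc) with ⟨a, ha⟩
      have : a ∈ c' := by
        rw [← List.mem_toFinset, ← heq, List.mem_toFinset]; exact ha
      exact hdisj a ha this)

/-- The set-of-chunk-sets is invariant under level-1 address-relation equivalence. -/
theorem chunkset_mem_of_releq {ts ts₀ : List PTree} {l l₀ : List ℕ}
    (hne : ts ≠ []) (hne₀ : ts₀ ≠ []) (hnd : l.Nodup) (hnd₀ : l₀.Nodup)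
    (hlen : l.length = numLeavesList ts) (hlen₀ : l₀.length = numLeavesList ts₀)
    (hmm : ∀ a : ℕ, a ∈ l ↔ a ∈ l₀)
    (hrel : ∀ a ∈ l₀, ∀ b ∈ l₀,
      ((addr (.node ts) l a).take 1 = (addr (.node ts) l b).take 1 ↔
       (addr (.node ts₀) l₀ a).take 1 = (addr (.node ts₀) l₀ b).take 1)) :
    ∀ c ∈ chunks ts l, ∃ c₀ ∈ chunks ts₀ l₀, c.toFinset = c₀.toFinset := by
  intro c hc
  rcases List.mem_iff_getElem.mp hc with ⟨i, hi, rfl⟩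
  have hi' : i < ts.length := by simpa using hi
  rcases List.exists_mem_of_ne_nil _ (chunk_nonempty hlen (List.getElem_mem hi)) with ⟨a, ha⟩
  have hal : a ∈ l := (chunks_sublist _ (List.getElem_mem hi)).mem ha
  have hal₀ : a ∈ l₀ := (hmm a).mp hal
  obtain ⟨i₀, hi₀, hai₀⟩ := mem_chunk_exists hlen₀ hal₀
  refine ⟨(chunks ts₀ l₀)[i₀]'(by simpa using hi₀), List.getElem_mem _, ?_⟩
  ext b
  simp only [List.mem_toFinset]
  rw [block_eq hne hnd hlen hi' ha b, block_eq hne₀ hnd₀ hlen₀ hi₀ hai₀ b]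
  constructor
  · rintro ⟨hbl, ht⟩
    have hbl₀ := (hmm b).mp hbl
    exact ⟨hbl₀, (hrel a hal₀ b hbl₀).mp ht.symm |>.symm⟩
  · rintro ⟨hbl₀, ht⟩
    have hbl := (hmm b).mpr hbl₀
    exact ⟨hbl, ((hrel a hal₀ b hbl₀).mpr ht.symm).symm⟩

/-- The fiber property: `x` is a labeled uniform-depth tree whose address relations agree
with those of `(T₀, l₀)` at every level. -/
def MFib (d : ℕ) (T₀ : PTree) (l₀ : List ℕ) (x : PTree × List ℕ) : Prop :=
  x.1.UniformDepth d ∧ x.2.Perm l₀ ∧ x.2.length = x.1.numLeaves ∧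
    ∀ j ≤ d, ∀ a ∈ l₀, ∀ b ∈ l₀,
      ((addr x.1 x.2 a).take j = (addr x.1 x.2 b).take j ↔
       (addr T₀ l₀ a).take j = (addr T₀ l₀ b).take j)

theorem master : ∀ (d : ℕ) (T₀ : PTree) (l₀ : List ℕ), T₀.UniformDepth d → l₀.Nodup →
    l₀.length = T₀.numLeaves → ∀ s : Finset (PTree × List ℕ),
    (∀ x ∈ s, MFib d T₀ l₀ x) → s.card ≤ T₀.tran := by
  intro d
  induction d with
  | zero =>
    intro T₀ l₀ hud hnd hlen s hs
    obtain rfl := ud_zero hud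
    obtain ⟨a₀, rfl⟩ := List.length_eq_one_iff.mp (hlen : l₀.length = 1)
    have hsub : ∀ x ∈ s, x = (PTree.node [], [a₀]) := by
      intro x hx
      obtain ⟨hud', hperm, _, _⟩ := hs x hx
      have h1 := ud_zero hud'
      have h2 := List.perm_singleton.mp hperm
      exact Prod.ext h1 h2
    calc s.card ≤ ({(PTree.node [], [a₀])} : Finset _).card :=
          Finset.card_le_card (fun x hx => by simp [hsub x hx])
      _ = 1 := Finset.card_singleton _
      _ ≤ (PTree.node []).tran := by simp [tran, tranList, Nat.factorial]
  | succ d ih =>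
    intro T₀ l₀ hud hnd₀ hlen s hs
    classical
    obtain ⟨ts₀, rfl, hne₀, hud₀⟩ := ud_succ hud
    have hlen₀ : l₀.length = numLeavesList ts₀ := by rwa [numLeaves_node_ne _ hne₀] at hlen
    set pick : Finset ℕ → PTree × List ℕ :=
      fun B => ((ts₀.zip (chunks ts₀ l₀)).find? (fun pc => decide (pc.2.toFinset = B))).getD
        (.node [], []) with hpick
    set γ : PTree × List ℕ → Finset ℕ := fun x => x.2.toFinset with hγ
    set F : Finset ℕ → PTree × List ℕ → Prop := fun B x => MFib d (pick B).1 (pick B).2 x with hF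
    set n : Finset ℕ → ℕ := fun B => (pick B).1.tran with hn
    set bs : List (Finset ℕ) := (chunks ts₀ l₀).map List.toFinset with hbs
    -- facts about pick
    have pick_spec : ∀ B ∈ bs, (pick B) ∈ ts₀.zip (chunks ts₀ l₀) ∧ (pick B).2.toFinset = B := by
      intro B hB
      rcases List.mem_map.mp hB with ⟨c₀, hc₀, rfl⟩
      rcases List.mem_iff_getElem.mp hc₀ with ⟨i₀, hi₀, rfl⟩
      have hi₀' : i₀ < ts₀.length := by simpa using hi₀
      have hsome : ((ts₀.zip (chunks ts₀ l₀)).find?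
          (fun pc => decide (pc.2.toFinset = ((chunks ts₀ l₀)[i₀]'hi₀).toFinset))).isSome := by
        rw [List.find?_isSome]
        exact ⟨(ts₀[i₀], (chunks ts₀ l₀)[i₀]), mem_zip_of_lt hi₀' hi₀, by simp⟩
      rcases Option.isSome_iff_exists.mp hsome with ⟨pc, hpc⟩
      have h1 := List.mem_of_find?_eq_some hpc
      have h2 := List.find?_some hpc
      simp only [decide_eq_true_eq] at h2
      simp only [hpick, hpc, Option.getD_some]
      exact ⟨h1, h2⟩
    have bs_nodup : bs.Nodup := chunkSets_nodup hnd₀ hlen₀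
    -- the fiber bound hypothesis for list_perm_count
    have hFbound : ∀ B, ∀ u : Finset (PTree × List ℕ), (∀ a ∈ u, F B a) → u.card ≤ n B := by
      intro B u hu
      by_cases hB : B ∈ bs
      · obtain ⟨hmem, hTF⟩ := pick_spec B hB
        have h1 : (pick B).1 ∈ ts₀ := (List.of_mem_zip hmem).1
        have h2 : (pick B).2 ∈ chunks ts₀ l₀ := (List.of_mem_zip hmem).2
        exact ih (pick B).1 (pick B).2 (hud₀ _ h1)
          (hnd₀.sublist (chunks_sublist _ h2))
          ((zipChunk_len hlen₀ _ hmem).symm ▸ rfl) u hu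
      · -- B not a chunk set: F B is empty since pick is only sensible on bs… show u = ∅
        have : ∀ x ∈ u, False := by
          intro x hx
          obtain ⟨hud', hperm, hlen', _⟩ := hu x hx
          -- (pick B).2.toFinset = B would hold if find? succeeded; otherwise pick B = default
          rcases hfind : ((ts₀.zip (chunks ts₀ l₀)).find? (fun pc => decide (pc.2.toFinset = B))) with _ | pc
          · have hpB : pick B = (.node [], []) := by simp [hpick, hfind]
            rw [hpB] at hperm
            have h0 : x.2.length = 0 := by simpa using hperm.length_eq
            have := numLeaves_pos x.1
            omega
          · have h2 := List.find?_some hfind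
            simp only [decide_eq_true_eq] at h2
            have h1 := List.mem_of_find?_eq_some hfind
            exact hB (by
              rw [hbs, List.mem_map]
              exact ⟨pc.2, (List.of_mem_zip h1).2, h2 ▸ (by simp [hpick, hfind])⟩)
        calc u.card ≤ (∅ : Finset (PTree × List ℕ)).card :=
              Finset.card_le_card (fun x hx => absurd hx (by intro h; exact this x h))
          _ = 0 := rfl
          _ ≤ n B := Nat.zero_le _
    -- pick is a retraction on actual (child, chunk) pairs of l₀
    have zc_map_snd : (ts₀.zip (chunks ts₀ l₀)).map Prod.snd = chunks ts₀ l₀ :=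
      List.map_snd_zip (by simp)
    have zc_map_fst : (ts₀.zip (chunks ts₀ l₀)).map Prod.fst = ts₀ :=
      List.map_fst_zip (by simp)
    have zc_map_γ : (ts₀.zip (chunks ts₀ l₀)).map γ = bs := by
      have h' : (ts₀.zip (chunks ts₀ l₀)).map γ
          = ((ts₀.zip (chunks ts₀ l₀)).map Prod.snd).map List.toFinset := by
        rw [List.map_map]; rfl
      rw [h', zc_map_snd, hbs]
    have pick_eq : ∀ pc ∈ ts₀.zip (chunks ts₀ l₀), pick (pc.2.toFinset) = pc := by
      intro pc hpc
      have hB : pc.2.toFinset ∈ bs := by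
        rw [← zc_map_γ]
        exact List.mem_map_of_mem (f := γ) hpc
      obtain ⟨hm, he⟩ := pick_spec _ hB
      have hnd' : ((ts₀.zip (chunks ts₀ l₀)).map γ).Nodup := by rw [zc_map_γ]; exact bs_nodup
      exact List.inj_on_of_nodup_map hnd' hm hpc he
    -- decompose elements of s into (child, chunk) pair lists
    set g : PTree × List ℕ → List (PTree × List ℕ) :=
      fun x => match x.1 with | .node ts => ts.zip (chunks ts x.2) with hg
    have key : ∀ x ∈ s, ∃ ts, x.1 = .node ts ∧ ts ≠ [] ∧ (∀ t ∈ ts, t.UniformDepth d) ∧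
        x.2.Nodup ∧ x.2.length = numLeavesList ts := by
      intro x hx
      obtain ⟨hud', hperm, hlen', _⟩ := hs x hx
      obtain ⟨ts, hts, hne, hudc⟩ := ud_succ hud'
      refine ⟨ts, hts, hne, hudc, hperm.nodup_iff.mpr hnd₀, ?_⟩
      rw [hlen', hts, numLeaves_node_ne _ hne]
    have hginj : Set.InjOn g s := by
      intro x hx y hy hxy
      obtain ⟨ts, htsx, -, -, -, hlx⟩ := key x hx
      obtain ⟨us, htsy, -, -, -, hly⟩ := key y hy
      have hgx : g x = ts.zip (chunks ts x.2) := by rw [hg]; simp only [htsx]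
      have hgy : g y = us.zip (chunks us y.2) := by rw [hg]; simp only [htsy]
      have h1 : ts = us := by
        have := congrArg (List.map Prod.fst) hxy
        rwa [hgx, hgy, List.map_fst_zip (l₁ := ts) (l₂ := chunks ts x.2) (by simp), List.map_fst_zip (l₁ := us) (l₂ := chunks us y.2) (by simp)] at this
      have h2 : x.2 = y.2 := by
        have := congrArg (fun as => (List.map Prod.snd as).flatten) hxy
        simp only [hgx, hgy] at this
        rwa [List.map_snd_zip (l₁ := ts) (l₂ := chunks ts x.2) (by simp), List.map_snd_zip (l₁ := us) (l₂ := chunks us y.2) (by simp),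
          join_chunks hlx, join_chunks hly] at this
      exact Prod.ext (by rw [htsx, htsy, h1]) h2
    -- the image satisfies the hypotheses of the counting lemma
    have himg : ∀ as ∈ s.image g, (as.map γ).Perm bs ∧ ∀ e ∈ as, F (γ e) e := by
      intro as has
      rcases Finset.mem_image.mp has with ⟨x, hx, rfl⟩
      obtain ⟨ts, htsx, hne, hudc, hndl, hlenl⟩ := key x hx
      obtain ⟨-, hperm, -, hrel⟩ := hs x hx
      have hgx : g x = ts.zip (chunks ts x.2) := by rw [hg]; simp only [htsx]
      have hmm : ∀ a : ℕ, a ∈ x.2 ↔ a ∈ l₀ := fun a => hperm.mem_iff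
      have hrelx : ∀ j, j ≤ d + 1 → ∀ a ∈ l₀, ∀ b ∈ l₀,
          ((addr (.node ts) x.2 a).take j = (addr (.node ts) x.2 b).take j ↔
           (addr (.node ts₀) l₀ a).take j = (addr (.node ts₀) l₀ b).take j) := by
        intro j hj a ha b hb
        have := hrel j hj a ha b hb
        rwa [htsx] at this
      have hmapγ : (g x).map γ = (chunks ts x.2).map List.toFinset := by
        have h' : (ts.zip (chunks ts x.2)).map γ
            = ((ts.zip (chunks ts x.2)).map Prod.snd).map List.toFinset := by
          rw [List.map_map]; rfl
        rw [hgx, h', List.map_snd_zip (l₁ := ts) (l₂ := chunks ts x.2) (by simp)]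
      have hperm_sets : ((g x).map γ).Perm bs := by
        rw [hmapγ, hbs]
        apply (List.perm_ext_iff_of_nodup (chunkSets_nodup hndl hlenl)
          (chunkSets_nodup hnd₀ hlen₀)).mpr
        intro B
        constructor
        · intro hB
          rcases List.mem_map.mp hB with ⟨c, hc, rfl⟩
          obtain ⟨c₀, hc₀, he⟩ := chunkset_mem_of_releq hne hne₀ hndl hnd₀ hlenl hlen₀ hmm
            (fun a ha b hb => hrelx 1 (by omega) a ha b hb) c hc
          rw [he]
          exact List.mem_map_of_mem hc₀
        · intro hB
          rcases List.mem_map.mp hB with ⟨c₀, hc₀, rfl⟩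
          obtain ⟨c, hc, he⟩ := chunkset_mem_of_releq hne₀ hne hnd₀ hndl hlen₀ hlenl
            (fun a => (hmm a).symm)
            (fun a ha b hb => ((hrelx 1 (by omega) a ((hmm a).mp ha) b ((hmm b).mp hb))).symm) c₀ hc₀
          rw [he]
          exact List.mem_map_of_mem hc
      refine ⟨hperm_sets, ?_⟩
      intro e he
      rw [hgx] at he
      rcases List.mem_iff_getElem.mp he with ⟨i, hzi, hei⟩
      have hi : i < ts.length := by rw [List.length_zip] at hzi; omega
      have hic : i < (chunks ts x.2).length := by rw [List.length_zip] at hzi; omega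
      rw [List.getElem_zip] at hei
      have he1 : e.1 = ts[i] := by rw [← hei]
      have he2 : e.2 = (chunks ts x.2)[i] := by rw [← hei]
      -- the matching chunk of l₀
      have hBbs : γ e ∈ bs := hperm_sets.subset (by
        rw [hgx]; exact List.mem_map_of_mem (f := γ) he)
      obtain ⟨hmemzc, hpickF⟩ := pick_spec _ hBbs
      rcases List.mem_iff_getElem.mp hmemzc with ⟨i₀, hzi₀, hpe⟩
      have hi₀ : i₀ < ts₀.length := by rw [List.length_zip] at hzi₀; omega
      have hi₀c : i₀ < (chunks ts₀ l₀).length := by rw [List.length_zip] at hzi₀; omega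
      rw [List.getElem_zip] at hpe
      have hp1 : (pick (γ e)).1 = ts₀[i₀] := by rw [← hpe]
      have hp2 : (pick (γ e)).2 = (chunks ts₀ l₀)[i₀] := by rw [← hpe]
      -- memberships transfer between e.2 and pick(γ e)).2
      have hmm2 : ∀ y : ℕ, y ∈ e.2 ↔ y ∈ (pick (γ e)).2 := by
        intro y
        rw [← List.mem_toFinset, ← List.mem_toFinset (l := (pick (γ e)).2), hpickF]
        try rfl
      have hsub0 : ∀ y ∈ (pick (γ e)).2, y ∈ l₀ := by
        intro y hy
        rw [hp2] at hy
        exact (chunks_sublist _ (List.getElem_mem _)).mem hy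
      have hsubl : ∀ y ∈ e.2, y ∈ x.2 := by
        intro y hy
        rw [he2] at hy
        exact (chunks_sublist _ (List.getElem_mem _)).mem hy
      have hndc : e.2.Nodup := by
        rw [he2]; exact hndl.sublist (chunks_sublist _ (List.getElem_mem _))
      have hndc₀ : (pick (γ e)).2.Nodup := by
        rw [hp2]; exact hnd₀.sublist (chunks_sublist _ (List.getElem_mem _))
      show MFib d (pick (γ e)).1 (pick (γ e)).2 e
      refine ⟨by rw [he1]; exact hudc _ (List.getElem_mem _), ?_, ?_, ?_⟩
      · exact (List.perm_ext_iff_of_nodup hndc hndc₀).mpr hmm2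
      · rw [he1, he2] at *
        exact zipChunk_len hlenl _ (mem_zip_of_lt hi hic)
      · intro j hj a ha b hb
        have ha2 : a ∈ e.2 := (hmm2 a).mpr ha
        have hb2 : b ∈ e.2 := (hmm2 b).mpr hb
        have hal₀ : a ∈ l₀ := hsub0 a ha
        have hbl₀ : b ∈ l₀ := hsub0 b hb
        have ha2' : a ∈ (chunks ts x.2)[i]'(by simpa using hi) := by rwa [he2] at ha2
        have hb2' : b ∈ (chunks ts x.2)[i]'(by simpa using hi) := by rwa [he2] at hb2
        have ha0' : a ∈ (chunks ts₀ l₀)[i₀]'(by simpa using hi₀) := by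
          rw [← hp2]; exact (hmm2 a).mp ha2
        have hb0' : b ∈ (chunks ts₀ l₀)[i₀]'(by simpa using hi₀) := by
          rw [← hp2]; exact (hmm2 b).mp hb2
        have step1 : (addr e.1 e.2 a).take j = (addr e.1 e.2 b).take j ↔
            (addr (.node ts) x.2 a).take (j+1) = (addr (.node ts) x.2 b).take (j+1) := by
          rw [addr_spec hne hndl i hi ha2', addr_spec hne hndl i hi hb2']
          simp only [List.take_succ_cons, List.cons.injEq, true_and]
          rw [he1, he2]
        have step2 := hrelx (j+1) (by omega) a hal₀ b hbl₀
        have step3 : (addr (.node ts₀) l₀ a).take (j+1) = (addr (.node ts₀) l₀ b).take (j+1) ↔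
            (addr (pick (γ e)).1 (pick (γ e)).2 a).take j =
            (addr (pick (γ e)).1 (pick (γ e)).2 b).take j := by
          rw [addr_spec hne₀ hnd₀ i₀ hi₀ ha0', addr_spec hne₀ hnd₀ i₀ hi₀ hb0']
          simp only [List.take_succ_cons, List.cons.injEq, true_and]
          rw [hp1, hp2]
        exact (step1.trans step2).trans step3
    -- put everything together
    have hcount := list_perm_count γ F n hFbound ts₀.length bs (by simp [hbs]) bs_nodup
      (s.image g) himg
    have hprod : (bs.map n).prod = tranList ts₀ := by
      have h1 : bs.map n = (ts₀.zip (chunks ts₀ l₀)).map (fun pc => (pick pc.2.toFinset).1.tran) := by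
        conv_lhs => rw [← zc_map_γ]
        rw [List.map_map]
        rfl
      rw [h1, List.map_congr_left (fun pc hpc => by rw [pick_eq pc hpc])]
      have h2 : (ts₀.zip (chunks ts₀ l₀)).map (fun pc : PTree × List ℕ => pc.1.tran)
          = ts₀.map tran := by
        conv_rhs => rw [← zc_map_fst]
        rw [List.map_map]
        rfl
      rw [h2, ← tranList_prod]
    calc s.card = (s.image g).card := (Finset.card_image_of_injOn hginj).symm
      _ ≤ ts₀.length.factorial * (bs.map n).prod := hcount
      _ = ts₀.length.factorial * tranList ts₀ := by rw [hprod]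
      _ = (PTree.node ts₀).tran := rfl

instance finpartition_finite (p : ℕ) : Finite (Finpartition (Finset.univ : Finset (Fin p))) :=
  Finite.of_injective (fun P => P.parts) (fun P Q h => Finpartition.ext (by simpa using h))

def addrRel (p : ℕ) (x : PTree × List ℕ) (j : ℕ) : Setoid (Fin p) :=
  ⟨fun a b => (addr x.1 x.2 a).take j = (addr x.1 x.2 b).take j,
   ⟨fun _ => rfl, Eq.symm, Eq.trans⟩⟩

instance (p : ℕ) (x : PTree × List ℕ) (j : ℕ) : DecidableRel (addrRel p x j).r :=
  fun _ _ => inferInstanceAs (Decidable (_ = _))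

noncomputable def chainOf (p k : ℕ) (x : PTree × List ℕ) :
    Fin k → Finpartition (Finset.univ : Finset (Fin p)) :=
  fun i => Finpartition.ofSetoid (addrRel p x ((i : ℕ) + 1))

theorem rel_of_ofSetoid_eq {p : ℕ} {s s' : Setoid (Fin p)} [DecidableRel s.r] [DecidableRel s'.r]
    (h : Finpartition.ofSetoid s = Finpartition.ofSetoid s') (a b : Fin p) :
    s.r a b ↔ s'.r a b := by
  rw [← Finpartition.mem_part_ofSetoid_iff_rel, ← Finpartition.mem_part_ofSetoid_iff_rel, h]

theorem chainOf_isKLevel (p k : ℕ) (x : PTree × List ℕ) : IsKLevel k (chainOf p k x) := by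
  intro i hik
  intro B hB
  obtain ⟨a, ha⟩ := Finpartition.nonempty_of_mem_parts _ hB
  have hBa : (Finpartition.ofSetoid (addrRel p x (i + 1 + 1))).part a = B :=
    Finpartition.part_eq_of_mem _ hB ha
  refine ⟨(Finpartition.ofSetoid (addrRel p x (i + 1))).part a,
    (Finpartition.part_mem _).mpr (Finset.mem_univ a), ?_⟩
  intro b hb
  rw [← hBa] at hb
  rw [Finpartition.mem_part_ofSetoid_iff_rel] at hb ⊢
  have hb' : (addr x.1 x.2 a).take (i+1+1) = (addr x.1 x.2 b).take (i+1+1) := hb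
  show (addr x.1 x.2 a).take (i+1) = (addr x.1 x.2 b).take (i+1)
  have h1 : (addr x.1 x.2 a).take (i+1) = ((addr x.1 x.2 a).take (i+1+1)).take (i+1) := by
    rw [List.take_take]; congr 1; omega
  have h2 : (addr x.1 x.2 b).take (i+1) = ((addr x.1 x.2 b).take (i+1+1)).take (i+1) := by
    rw [List.take_take]; congr 1; omega
  rw [h1, h2, hb']

theorem tran_fiber_bound (k p : ℕ) (x₀ : PTree × List ℕ)
    (hud₀ : x₀.1.UniformDepth (k+1)) (hperm₀ : x₀.2.Perm (List.range p))
    (hlen₀ : x₀.2.length = x₀.1.numLeaves)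
    (s : Finset (PTree × List ℕ))
    (hsx : ∀ x ∈ s, x.1.UniformDepth (k+1) ∧ x.2.Perm (List.range p) ∧
      x.2.length = x.1.numLeaves ∧ chainOf p k x = chainOf p k x₀) :
    s.card ≤ x₀.1.tran := by
  have hnd₀ : x₀.2.Nodup := hperm₀.nodup_iff.mpr (List.nodup_range)
  apply master (k+1) x₀.1 x₀.2 hud₀ hnd₀ hlen₀ s
  intro x hx
  obtain ⟨hud, hperm, hlen, hchain⟩ := hsx x hx
  have hndx : x.2.Nodup := hperm.nodup_iff.mpr (List.nodup_range)
  refine ⟨hud, hperm.trans hperm₀.symm, hlen, ?_⟩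
  intro j hj a ha b hb
  have hap : a < p := List.mem_range.mp (hperm₀.subset ha)
  have hbp : b < p := List.mem_range.mp (hperm₀.subset hb)
  have ha' : a ∈ x.2 := (hperm.trans hperm₀.symm).mem_iff.mpr ha
  have hb' : b ∈ x.2 := (hperm.trans hperm₀.symm).mem_iff.mpr hb
  rcases Nat.eq_or_lt_of_le hj with hj1 | hj2
  · -- j = k + 1 : full addresses, relation is discreteness on both sides
    subst hj1
    have len1 : (addr x.1 x.2 a).length = k+1 := addr_length hud _ _ hndx hlen ha'
    have len2 : (addr x.1 x.2 b).length = k+1 := addr_length hud _ _ hndx hlen hb'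
    have len3 : (addr x₀.1 x₀.2 a).length = k+1 := addr_length hud₀ _ _ hnd₀ hlen₀ ha
    have len4 : (addr x₀.1 x₀.2 b).length = k+1 := addr_length hud₀ _ _ hnd₀ hlen₀ hb
    rw [List.take_of_length_le (le_of_eq len1), List.take_of_length_le (le_of_eq len2),
      List.take_of_length_le (le_of_eq len3), List.take_of_length_le (le_of_eq len4)]
    constructor
    · intro h
      have := addr_inj hud _ _ _ hndx hlen ha' hb' h
      subst this; rfl
    · intro h
      have := addr_inj hud₀ _ _ _ hnd₀ hlen₀ ha hb h
      subst this; rfl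
  · -- j ≤ k
    rcases Nat.eq_zero_or_pos j with rfl | hjpos
    · simp
    · have hik : j - 1 < k := by omega
      have := congrFun hchain ⟨j - 1, hik⟩
      have hiff := rel_of_ofSetoid_eq this ⟨a, hap⟩ ⟨b, hbp⟩
      have hj1 : (j - 1) + 1 = j := by omega
      have hiff' : (addr x.1 x.2 a).take ((j-1)+1) = (addr x.1 x.2 b).take ((j-1)+1) ↔
          (addr x₀.1 x₀.2 a).take ((j-1)+1) = (addr x₀.1 x₀.2 b).take ((j-1)+1) := hiff
      rwa [hj1] at hiff'

theorem main_count (k p : ℕ) (𝒯 : Set PTree) (hfin : 𝒯.Finite)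
    (htree : ∀ T ∈ 𝒯, T.UniformDepth (k + 1) ∧ T.numLeaves = p)
    (N : ℕ) (hnice : ∀ T ∈ 𝒯, T.tran ≤ N) :
    𝒯.ncard * p.factorial ≤ bellk k p * N := by
  classical
  set L : Finset (List ℕ) := ((List.range p).permutations).toFinset with hL
  set S : Finset (PTree × List ℕ) := hfin.toFinset ×ˢ L with hS
  have hmemS : ∀ x : PTree × List ℕ, x ∈ S ↔ x.1 ∈ 𝒯 ∧ x.2.Perm (List.range p) := by
    intro x
    rw [hS, Finset.mem_product, hL, List.mem_toFinset, Set.Finite.mem_toFinset,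
      List.mem_permutations]
  have hcardS : S.card = 𝒯.ncard * p.factorial := by
    rw [hS, Finset.card_product]
    congr 1
    · exact (Set.ncard_eq_toFinset_card 𝒯 hfin).symm
    · rw [hL, List.toFinset_card_of_nodup (List.nodup_permutations _ (List.nodup_range)),
        List.length_permutations, List.length_range]
  set f := chainOf p k with hf
  have hfib : ∀ b ∈ S.image f, (S.filter fun x => f x = b).card ≤ N := by
    intro b hb
    rcases Finset.mem_image.mp hb with ⟨x₀, hx₀S, rfl⟩
    obtain ⟨hT₀, hperm₀⟩ := (hmemS x₀).mp hx₀S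
    obtain ⟨hud₀, hnl₀⟩ := htree _ hT₀
    have hlen₀ : x₀.2.length = x₀.1.numLeaves := by
      rw [hperm₀.length_eq, List.length_range, hnl₀]
    calc (S.filter fun x => f x = f x₀).card ≤ x₀.1.tran := by
          apply tran_fiber_bound k p x₀ hud₀ hperm₀ hlen₀
          intro x hx
          rcases Finset.mem_filter.mp hx with ⟨hxS, hchain⟩
          obtain ⟨hT, hperm⟩ := (hmemS x).mp hxS
          obtain ⟨hud, hnl⟩ := htree _ hT
          exact ⟨hud, hperm, by rw [hperm.length_eq, List.length_range, hnl], hchain⟩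
      _ ≤ N := hnice _ hT₀
  have himg : (S.image f).card ≤ bellk k p := by
    have einj : Function.Injective
        (fun b : {b // b ∈ S.image f} =>
          (⟨b.1, by
            rcases Finset.mem_image.mp b.2 with ⟨x, _, hfx⟩
            rw [← hfx]
            exact chainOf_isKLevel p k x⟩ :
            {g : Fin k → Finpartition (Finset.univ : Finset (Fin p)) // IsKLevel k g})) := by
      intro b1 b2 h
      simp only [Subtype.mk.injEq] at h
      exact Subtype.ext h
    calc (S.image f).card = Nat.card {b // b ∈ S.image f} := by
          rw [Nat.card_eq_fintype_card, Fintype.card_coe]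
      _ ≤ bellk k p := Nat.card_le_card_of_injective _ einj
  calc 𝒯.ncard * p.factorial = S.card := hcardS.symm
    _ ≤ N * (S.image f).card := Finset.card_le_mul_card_image S N hfib
    _ ≤ N * bellk k p := Nat.mul_le_mul_left N himg
    _ = bellk k p * N := Nat.mul_comm ..

theorem factorial_ge (p : ℕ) : ((p:ℝ)/Real.exp 1)^p ≤ (p.factorial : ℝ) := by
  have h := Real.pow_div_factorial_le_exp (x := (p:ℝ)) (by positivity) p
  rw [div_pow, div_le_iff₀ (by positivity : (0:ℝ) < (Real.exp 1)^p)]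
  rw [div_le_iff₀ (by positivity : (0:ℝ) < (p.factorial:ℝ))] at h
  rw [Real.exp_one_pow]
  calc (p:ℝ)^p ≤ Real.exp p * p.factorial := h
    _ = p.factorial * Real.exp p := mul_comm _ _

theorem final (k p : ℕ) (hp : 1 ≤ p)
    (C : ℝ) (hC : 1 ≤ C) (𝒯 : Set PTree) (hfin : 𝒯.Finite)
    (htree : ∀ T ∈ 𝒯, T.UniformDepth (k + 1) ∧ T.numLeaves = p)
    (hnice : ∀ T ∈ 𝒯, (T.tran : ℝ) ≤ C ^ p) :
    ((p : ℝ) / (Real.exp 1 * C ^ 2)) * (𝒯.ncard : ℝ) ^ (1 / (p : ℝ)) ≤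
      (bellk k p : ℝ) ^ (1 / (p : ℝ)) := by
  classical
  have hp0 : (0:ℝ) < p := by exact_mod_cast hp
  rcases Set.eq_empty_or_nonempty 𝒯 with rfl | hne
  · rw [Set.ncard_empty]
    push_cast
    rw [Real.zero_rpow (by positivity), mul_zero]
    exact Real.rpow_nonneg (Nat.cast_nonneg _) _
  · set N := ⌊C^p⌋₊ with hN
    have hCp : (0:ℝ) ≤ C ^ p := by positivity
    have hNle : (N:ℝ) ≤ C^p := Nat.floor_le hCp
    have hkey := main_count k p 𝒯 hfin htree N
      (fun T hT => Nat.le_floor (by exact_mod_cast hnice T hT))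
    have hkeyR : (𝒯.ncard : ℝ) * p.factorial ≤ (bellk k p : ℝ) * C^p := by
      calc (𝒯.ncard : ℝ) * p.factorial = ((𝒯.ncard * p.factorial : ℕ) : ℝ) := by push_cast; ring
        _ ≤ ((bellk k p * N : ℕ) : ℝ) := by exact_mod_cast hkey
        _ = (bellk k p : ℝ) * N := by push_cast; ring
        _ ≤ (bellk k p : ℝ) * C^p := mul_le_mul_of_nonneg_left hNle (Nat.cast_nonneg _)
    have hC0 : (0:ℝ) < C := lt_of_lt_of_le one_pos hC
    have hbell : (𝒯.ncard : ℝ) * p.factorial / C^p ≤ (bellk k p : ℝ) := by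
      rw [div_le_iff₀ (by positivity)]; exact hkeyR
    have h1 : ((𝒯.ncard : ℝ) * p.factorial / C^p) ^ (1/(p:ℝ)) ≤ (bellk k p : ℝ) ^ (1/(p:ℝ)) :=
      Real.rpow_le_rpow (by positivity) hbell (by positivity)
    refine le_trans ?_ h1
    rw [Real.div_rpow (by positivity) (by positivity),
      Real.mul_rpow (Nat.cast_nonneg _) (Nat.cast_nonneg _)]
    have hCpow : ((C^p : ℝ)) ^ (1/(p:ℝ)) = C := by
      rw [← Real.rpow_natCast C p, ← Real.rpow_mul (le_of_lt hC0),
        mul_one_div, div_self (ne_of_gt hp0), Real.rpow_one]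
    rw [hCpow]
    have hfact : ((p:ℝ)/Real.exp 1) ≤ ((p.factorial : ℝ)) ^ (1/(p:ℝ)) := by
      have h2 := Real.rpow_le_rpow (by positivity) (factorial_ge p)
        (le_of_lt (one_div_pos.mpr hp0))
      rwa [← Real.rpow_natCast ((p:ℝ)/Real.exp 1) p, ← Real.rpow_mul (by positivity),
        mul_one_div, div_self (ne_of_gt hp0), Real.rpow_one] at h2
    have hT0 : (0:ℝ) ≤ (𝒯.ncard:ℝ) ^ (1/(p:ℝ)) := Real.rpow_nonneg (Nat.cast_nonneg _) _
    have hexp : (0:ℝ) < Real.exp 1 := Real.exp_pos 1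
    have hstep1 : (p:ℝ)/(Real.exp 1 * C^2) ≤ ((p:ℝ)/Real.exp 1) / C := by
      rw [div_div]
      gcongr
      nlinarith
    have hstep2 : ((p:ℝ)/Real.exp 1) / C ≤ ((p.factorial : ℝ)) ^ (1/(p:ℝ)) / C := by
      gcongr
    calc (p:ℝ)/(Real.exp 1 * C^2) * (𝒯.ncard:ℝ)^(1/(p:ℝ))
        ≤ ((p.factorial : ℝ)) ^ (1/(p:ℝ)) / C * (𝒯.ncard:ℝ)^(1/(p:ℝ)) :=
          mul_le_mul_of_nonneg_right (hstep1.trans hstep2) hT0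
      _ = (𝒯.ncard:ℝ)^(1/(p:ℝ)) * ((p.factorial : ℝ)) ^ (1/(p:ℝ)) / C := by ring

end PTree

/-- Let `k ≥ 0`, `p ≥ 1` and `C ≥ 1`. If `𝒯` is a finite set of
pairwise distinct `(k,p)`-trees (rooted plane trees with exactly `p` leaves in which
every root-to-leaf path has exactly `k+1` edges), each of which is `C`-nice
(`Tran(T) ≤ C^p`), then `bell_k(p)^{1/p} ≥ (p / (e · C²)) · |𝒯|^{1/p}`. -/
theorem bellk_lower_bound_of_nice_trees (k p : ℕ) (hp : 1 ≤ p)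
    (C : ℝ) (hC : 1 ≤ C) (𝒯 : Set PTree) (hfin : 𝒯.Finite)
    (htree : ∀ T ∈ 𝒯, T.UniformDepth (k + 1) ∧ T.numLeaves = p)
    (hnice : ∀ T ∈ 𝒯, (T.tran : ℝ) ≤ C ^ p) :
    ((p : ℝ) / (Real.exp 1 * C ^ 2)) * (𝒯.ncard : ℝ) ^ (1 / (p : ℝ)) ≤
      (bellk k p : ℝ) ^ (1 / (p : ℝ)) := by
  exact PTree.final k p hp C hC 𝒯 hfin htree hnice
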